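/- Fix g > 1, ω > 1, γ ≥ 1, η ∈ (0,1). Define for μ > 1: I_AB(μ) := (1/2)·log₂( V_A(μ)/(V_A(μ) − gη(μ²−1)/(gμ+(g−1)ω)) ) with V_A(μ) = ημ+(1−η)γ; χ_AE(μ) := S_T(μ) − S_C(μ) with S_T(μ) = h(ν₁(μ))+h(ν₂(μ)) for the symplectic eigenvalues of [[((g−1)μ+gω)I, √(g(ω²−1))Z],[√(g(ω²−1))Z, ωI]], and S_C(μ) = h(ν̄₁(μ))+h(ν̄₂(μ)) for the symplectic eigenvalues of V_{E′e}(μ) − (1/V_A(μ))·u(μ)u(μ)ᵀ, u(μ) = (√((g−1)η(μ²−1)),0,0,0)ᵀ. Then I_AB(μ) − χ_AE(μ) converges as μ → ∞ to R▶(g,ω,η,γ) := (1/2)·log₂( g·[gηω + γ(g−1)(1−η)] / ( (g−1)·[gγ(1−η) + ηω(g−1)] ) ) + h( √( ω·[gη + γω(g−1)(1−η)] / (gηω + γ(g−1)(1−η)) ) ) − h(ω). -/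

import Mathlib

open Real Filter Matrix Polynomial

/-- The standard two-mode symplectic form `Ω₂`. -/
noncomputable def Omega2 : Matrix (Fin 4) (Fin 4) ℝ :=
  !![0, 1, 0, 0; -1, 0, 0, 0; 0, 0, 0, 1; 0, 0, -1, 0]

/-- Eve's total covariance matrix
`V_{E′e}(μ) = [[((g−1)μ+gω)I, √(g(ω²−1))Z],[√(g(ω²−1))Z, ωI]]`. -/
noncomputable def VEe (g ω μ : ℝ) : Matrix (Fin 4) (Fin 4) ℝ :=
  !![(g - 1) * μ + g * ω, 0, Real.sqrt (g * (ω ^ 2 - 1)), 0;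
     0, (g - 1) * μ + g * ω, 0, -Real.sqrt (g * (ω ^ 2 - 1));
     Real.sqrt (g * (ω ^ 2 - 1)), 0, ω, 0;
     0, -Real.sqrt (g * (ω ^ 2 - 1)), 0, ω]

/-- The DR conditioning vector `u(μ) = (√((g−1)η(μ²−1)), 0, 0, 0)ᵀ`. -/
noncomputable def uDR (g η μ : ℝ) : Fin 4 → ℝ :=
  ![Real.sqrt ((g - 1) * η * (μ ^ 2 - 1)), 0, 0, 0]

/-- Eve's conditional covariance matrix after Alice's `q`-homodyne:
`M(μ) = V_{E′e}(μ) − (1/(ημ+(1−η)γ))·u(μ)u(μ)ᵀ`. -/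
noncomputable def Mdr (g ω γ η μ : ℝ) : Matrix (Fin 4) (Fin 4) ℝ :=
  VEe g ω μ - (η * μ + (1 - η) * γ)⁻¹ • Matrix.vecMulVec (uDR g η μ) (uDR g η μ)

/-- The bosonic entropy function. -/
noncomputable def h (x : ℝ) : ℝ :=
  ((x + 1) / 2) * Real.logb 2 ((x + 1) / 2) - ((x - 1) / 2) * Real.logb 2 ((x - 1) / 2)

/-- `Δ(μ)` for Eve's total covariance matrix `V_{E′e}(μ)`. -/
noncomputable def Delta (g ω μ : ℝ) : ℝ :=
  ((g - 1) * μ + g * ω) ^ 2 + ω ^ 2 - 2 * (g * (ω ^ 2 - 1))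

/-- `D(μ)` for Eve's total covariance matrix `V_{E′e}(μ)`. -/
noncomputable def Dprod (g ω μ : ℝ) : ℝ :=
  (((g - 1) * μ + g * ω) * ω - g * (ω ^ 2 - 1)) ^ 2

/-- The larger symplectic eigenvalue of `V_{E′e}(μ)`. -/
noncomputable def nu1 (g ω μ : ℝ) : ℝ :=
  Real.sqrt ((Delta g ω μ + Real.sqrt ((Delta g ω μ) ^ 2 - 4 * Dprod g ω μ)) / 2)

/-- The smaller symplectic eigenvalue of `V_{E′e}(μ)`. -/
noncomputable def nu2 (g ω μ : ℝ) : ℝ :=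
  Real.sqrt ((Delta g ω μ - Real.sqrt ((Delta g ω μ) ^ 2 - 4 * Dprod g ω μ)) / 2)

/-- The closed-form DR rate `R▶(g, ω, η, γ)` of Theorem 1. -/
noncomputable def Rdr (g ω η γ : ℝ) : ℝ :=
  (1 / 2) * Real.logb 2
      (g * (g * η * ω + γ * (g - 1) * (1 - η)) /
        ((g - 1) * (g * γ * (1 - η) + η * ω * (g - 1))))
    + h (Real.sqrt (ω * (g * η + γ * ω * (g - 1) * (1 - η)) /
        (g * η * ω + γ * (g - 1) * (1 - η))))
    - h ω

section Helpers


lemma ratlim (A B Cc D : ℝ) (hC : 0 < Cc) :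
    Tendsto (fun μ : ℝ => (A * μ + B) / (Cc * μ + D)) atTop (nhds (A / Cc)) := by
  have hden : Tendsto (fun μ : ℝ => Cc * μ + D) atTop atTop :=
    tendsto_atTop_add_const_right _ D (tendsto_id.const_mul_atTop hC)
  have h1 : Tendsto (fun μ : ℝ => (A + B * μ⁻¹) / (Cc + D * μ⁻¹)) atTop (nhds (A / Cc)) := by
    have hB : Tendsto (fun μ : ℝ => A + B * μ⁻¹) atTop (nhds A) := by
      simpa using tendsto_const_nhds.add (tendsto_inv_atTop_zero.const_mul B)
    have hD : Tendsto (fun μ : ℝ => Cc + D * μ⁻¹) atTop (nhds Cc) := by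
      simpa using tendsto_const_nhds.add (tendsto_inv_atTop_zero.const_mul D)
    exact hB.div hD hC.ne'
  refine Filter.Tendsto.congr' ?_ h1
  filter_upwards [eventually_gt_atTop 0, hden.eventually_gt_atTop 0] with μ hμ hd
  field_simp

lemma sqrt_tendsto_atTop : Tendsto Real.sqrt atTop atTop := by
  rw [Filter.tendsto_atTop_atTop]
  intro b
  refine ⟨b ^ 2, fun a ha => ?_⟩
  rcases le_or_gt b 0 with hb | hb
  · exact hb.trans (Real.sqrt_nonneg a)
  · calc b = Real.sqrt (b ^ 2) := (Real.sqrt_sq hb.le).symm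
      _ ≤ Real.sqrt a := Real.sqrt_le_sqrt ha

lemma h_continuousAt {x : ℝ} (hx : 1 < x) : ContinuousAt h x := by
  have h1 : ContinuousAt (fun y : ℝ => (y + 1) / 2) x := by fun_prop
  have h2 : ContinuousAt (fun y : ℝ => (y - 1) / 2) x := by fun_prop
  have l1 : ContinuousAt (fun y : ℝ => Real.logb 2 ((y + 1) / 2)) x :=
    (Real.continuousAt_logb (by positivity)).comp h1
  have l2 : ContinuousAt (fun y : ℝ => Real.logb 2 ((y - 1) / 2)) x :=
    (Real.continuousAt_logb (ne_of_gt (by nlinarith))).comp h2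
  exact (h1.mul l1).sub (h2.mul l2)

lemma h_sub_logb : ∃ c : ℝ, Tendsto (fun x => h x - Real.logb 2 x) atTop (nhds c) := by
  have hlog2 : Real.log 2 ≠ 0 := (Real.log_pos (by norm_num)).ne'
  refine ⟨(1 + Real.log 1 + Real.log 1 - Real.log 2) / Real.log 2, ?_⟩
  have t1 : Tendsto (fun x : ℝ => (x - 1) / 2 * Real.log (1 + 2 / (x - 1))) atTop (nhds 1) := by
    have base := Real.tendsto_mul_log_one_add_div_atTop 2
    have comp := base.comp (tendsto_atTop_add_const_right atTop (-1 : ℝ) tendsto_id)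
    have h2 := comp.div_const 2
    norm_num at h2
    refine h2.congr fun x => ?_
    simp only [Function.comp, sub_eq_add_neg]
    ring
  have harg : Tendsto (fun x : ℝ => 1 + 2 / (x - 1)) atTop (nhds 1) := by
    have : Tendsto (fun x : ℝ => 2 / (x - 1)) atTop (nhds 0) :=
      Filter.Tendsto.div_atTop tendsto_const_nhds
        (tendsto_atTop_add_const_right _ (-1 : ℝ) tendsto_id)
    simpa using tendsto_const_nhds.add this
  have t2 : Tendsto (fun x : ℝ => Real.log (1 + 2 / (x - 1))) atTop (nhds (Real.log 1)) :=
    ((Real.continuousAt_log one_ne_zero).tendsto).comp harg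
  have t3 : Tendsto (fun x : ℝ => Real.log ((x - 1) / x)) atTop (nhds (Real.log 1)) := by
    have harg2 : Tendsto (fun x : ℝ => (x - 1) / x) atTop (nhds 1) := by
      have := ratlim 1 (-1) 1 0 one_pos
      norm_num at this
      exact this.congr fun x => by ring_nf
    exact ((Real.continuousAt_log one_ne_zero).tendsto).comp harg2
  have tF : Tendsto (fun x : ℝ =>
      ((x - 1) / 2 * Real.log (1 + 2 / (x - 1)) + Real.log (1 + 2 / (x - 1))
        + Real.log ((x - 1) / x) - Real.log 2) / Real.log 2) atTop
      (nhds ((1 + Real.log 1 + Real.log 1 - Real.log 2) / Real.log 2)) :=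
    (((t1.add t2).add t3).sub_const (Real.log 2)).div_const (Real.log 2)
  refine Filter.Tendsto.congr' ?_ tF
  filter_upwards [eventually_gt_atTop 1] with x hx
  have hx1 : (0:ℝ) < x - 1 := by linarith
  have hx0 : (0:ℝ) < x := by linarith
  have hx2 : (0:ℝ) < x + 1 := by linarith
  have e1 : Real.log ((x + 1) / 2) = Real.log (x + 1) - Real.log 2 :=
    Real.log_div (by positivity) two_ne_zero
  have e2 : Real.log ((x - 1) / 2) = Real.log (x - 1) - Real.log 2 :=
    Real.log_div hx1.ne' two_ne_zero
  have e3 : (1 : ℝ) + 2 / (x - 1) = (x + 1) / (x - 1) := by field_simp; ring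
  have e4 : Real.log ((x + 1) / (x - 1)) = Real.log (x + 1) - Real.log (x - 1) :=
    Real.log_div (by positivity) hx1.ne'
  have e5 : Real.log ((x - 1) / x) = Real.log (x - 1) - Real.log x :=
    Real.log_div hx1.ne' hx0.ne'
  simp only [h, Real.logb, e1, e2, e3, e4, e5]
  field_simp
  ring

lemma charpoly_form (p q r s : ℝ) :
    Matrix.charpoly (!![0, q, 0, -r; -p, 0, -r, 0; 0, -r, 0, s; -r, 0, -s, 0] :
        Matrix (Fin 4) (Fin 4) ℝ) =
      X ^ 4 + C (p * q + s ^ 2 - 2 * r ^ 2) * X ^ 2 + C ((p * s - r ^ 2) * (q * s - r ^ 2)) := by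
  rw [Matrix.charpoly]
  have : charmatrix (!![0, q, 0, -r; -p, 0, -r, 0; 0, -r, 0, s; -r, 0, -s, 0] :
      Matrix (Fin 4) (Fin 4) ℝ) =
      !![X, -C q, 0, C r; C p, X, C r, 0; 0, C r, X, -C s; C r, 0, C s, X] := by
    ext i j
    fin_cases i <;> fin_cases j <;>
      simp [charmatrix_apply_eq, charmatrix_apply_ne, Matrix.one_apply]
  rw [this]
  simp [Matrix.det_succ_row_zero, Fin.sum_univ_succ, Matrix.submatrix, Fin.succAbove,
    Fin.castSucc, Fin.castAdd, Fin.castLE, Fin.succ]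
  push_cast [map_ofNat]
  ring

set_option maxHeartbeats 1000000 in
lemma Mdr_eq (g ω γ η μ : ℝ) (hk : 0 ≤ (g - 1) * η * (μ ^ 2 - 1)) :
    Mdr g ω γ η μ =
      !![(g - 1) * μ + g * ω - (η * μ + (1 - η) * γ)⁻¹ * ((g - 1) * η * (μ ^ 2 - 1)), 0,
           Real.sqrt (g * (ω ^ 2 - 1)), 0;
         0, (g - 1) * μ + g * ω, 0, -Real.sqrt (g * (ω ^ 2 - 1));
         Real.sqrt (g * (ω ^ 2 - 1)), 0, ω, 0;
         0, -Real.sqrt (g * (ω ^ 2 - 1)), 0, ω] := by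
  have hs : Real.sqrt ((g - 1) * η * (μ ^ 2 - 1)) * Real.sqrt ((g - 1) * η * (μ ^ 2 - 1)) =
      (g - 1) * η * (μ ^ 2 - 1) := Real.mul_self_sqrt hk
  ext i j
  fin_cases i <;> fin_cases j <;>
    simp [Mdr, VEe, uDR, Matrix.vecMulVec_apply, Matrix.sub_apply, Matrix.smul_apply, hs]

set_option maxHeartbeats 1000000 in
lemma omega_mul_Mdr (g ω γ η μ : ℝ) (hk : 0 ≤ (g - 1) * η * (μ ^ 2 - 1)) :
    Omega2 * Mdr g ω γ η μ =
      !![0, (g - 1) * μ + g * ω, 0, -Real.sqrt (g * (ω ^ 2 - 1));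
         -((g - 1) * μ + g * ω - (η * μ + (1 - η) * γ)⁻¹ * ((g - 1) * η * (μ ^ 2 - 1))), 0,
           -Real.sqrt (g * (ω ^ 2 - 1)), 0;
         0, -Real.sqrt (g * (ω ^ 2 - 1)), 0, ω;
         -Real.sqrt (g * (ω ^ 2 - 1)), 0, -ω, 0] := by
  rw [Mdr_eq g ω γ η μ hk]
  ext i j
  fin_cases i <;> fin_cases j <;>
    simp [Omega2, Matrix.mul_apply, Fin.sum_univ_four]
lemma charpoly_Mdr (g ω γ η μ : ℝ) (hk : 0 ≤ (g - 1) * η * (μ ^ 2 - 1))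
    (hc2 : 0 ≤ g * (ω ^ 2 - 1)) :
    Matrix.charpoly (Omega2 * Mdr g ω γ η μ) =
      X ^ 4
        + C (((g - 1) * μ + g * ω - (η * μ + (1 - η) * γ)⁻¹ * ((g - 1) * η * (μ ^ 2 - 1)))
              * ((g - 1) * μ + g * ω) + ω ^ 2 - 2 * (g * (ω ^ 2 - 1))) * X ^ 2
        + C ((((g - 1) * μ + g * ω - (η * μ + (1 - η) * γ)⁻¹ * ((g - 1) * η * (μ ^ 2 - 1))) * ω
                - g * (ω ^ 2 - 1))
              * (((g - 1) * μ + g * ω) * ω - g * (ω ^ 2 - 1))) := by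
  rw [omega_mul_Mdr g ω γ η μ hk, charpoly_form, Real.sq_sqrt hc2]

lemma sympl_limits {Δf Df φ : ℝ → ℝ} {dl q : ℝ} (hdl : 0 < dl)
    (hφ : Tendsto φ atTop atTop)
    (hd : Tendsto (fun μ => Δf μ / φ μ) atTop (nhds dl))
    (hq : Tendsto (fun μ => Df μ / φ μ) atTop (nhds q)) :
    Tendsto (fun μ => (Δf μ + Real.sqrt (Δf μ ^ 2 - 4 * Df μ)) / 2 / φ μ) atTop (nhds dl)
    ∧ Tendsto (fun μ => (Δf μ - Real.sqrt (Δf μ ^ 2 - 4 * Df μ)) / 2) atTop (nhds (q / dl))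
    ∧ Tendsto (fun μ => (Δf μ + Real.sqrt (Δf μ ^ 2 - 4 * Df μ)) / 2) atTop atTop
    ∧ (∀ᶠ μ in atTop, 0 < (Δf μ + Real.sqrt (Δf μ ^ 2 - 4 * Df μ)) / 2) := by
  have hφpos : ∀ᶠ μ in atTop, 0 < φ μ := hφ.eventually_gt_atTop 0
  have hinv : Tendsto (fun μ => (φ μ)⁻¹) atTop (nhds 0) := hφ.inv_tendsto_atTop
  have hE : Tendsto (fun μ => (Δf μ ^ 2 - 4 * Df μ) / (φ μ) ^ 2) atTop (nhds (dl ^ 2)) := by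
    have base : Tendsto (fun μ => (Δf μ / φ μ) ^ 2 - 4 * (Df μ / φ μ) * (φ μ)⁻¹) atTop
        (nhds (dl ^ 2 - 4 * q * 0)) := ((hd.pow 2).sub (((hq.const_mul 4).mul hinv)))
    rw [mul_zero, sub_zero] at base
    refine Filter.Tendsto.congr' ?_ base
    filter_upwards [hφpos] with μ h0
    field_simp
  have hEpos : ∀ᶠ μ in atTop, 0 < Δf μ ^ 2 - 4 * Df μ := by
    filter_upwards [hE.eventually_const_lt (by positivity : (0:ℝ) < dl ^ 2), hφpos] with μ h1 h2
    have := mul_pos h1 (pow_pos h2 2)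
    rwa [div_mul_cancel₀] at this
    positivity
  have hsq : Tendsto (fun μ => Real.sqrt (Δf μ ^ 2 - 4 * Df μ) / φ μ) atTop (nhds dl) := by
    have base : Tendsto (fun μ => Real.sqrt ((Δf μ ^ 2 - 4 * Df μ) / (φ μ) ^ 2)) atTop
        (nhds (Real.sqrt (dl ^ 2))) := (Real.continuous_sqrt.tendsto _).comp hE
    rw [Real.sqrt_sq hdl.le] at base
    refine Filter.Tendsto.congr' ?_ base
    filter_upwards [hφpos] with μ h0
    rw [Real.sqrt_div' _ (sq_nonneg (φ μ)), Real.sqrt_sq h0.le]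
  have hN1d : Tendsto (fun μ => (Δf μ + Real.sqrt (Δf μ ^ 2 - 4 * Df μ)) / 2 / φ μ) atTop
      (nhds dl) := by
    have base := (hd.add hsq).div_const 2
    have : (dl + dl) / 2 = dl := by ring
    rw [this] at base
    refine Filter.Tendsto.congr' ?_ base
    filter_upwards [hφpos] with μ h0
    rw [← add_div, div_div, div_div, mul_comm (φ μ) 2]
  have hN1pos : ∀ᶠ μ in atTop, 0 < (Δf μ + Real.sqrt (Δf μ ^ 2 - 4 * Df μ)) / 2 := by
    filter_upwards [hN1d.eventually_const_lt hdl, hφpos] with μ h1 h2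
    have := mul_pos h1 h2
    rwa [div_mul_cancel₀ _ h2.ne'] at this
  have hN1top : Tendsto (fun μ => (Δf μ + Real.sqrt (Δf μ ^ 2 - 4 * Df μ)) / 2) atTop atTop := by
    have base := Filter.Tendsto.pos_mul_atTop hdl hN1d hφ
    refine Filter.Tendsto.congr' ?_ base
    filter_upwards [hφpos] with μ h0
    rw [div_mul_cancel₀ _ h0.ne']
  have hN2 : Tendsto (fun μ => (Δf μ - Real.sqrt (Δf μ ^ 2 - 4 * Df μ)) / 2) atTop
      (nhds (q / dl)) := by
    have base : Tendsto (fun μ => 2 * (Df μ / φ μ) / ((Δf μ / φ μ) + Real.sqrt (Δf μ ^ 2 - 4 * Df μ) / φ μ))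
        atTop (nhds (2 * q / (dl + dl))) := (hq.const_mul 2).div (hd.add hsq) (by positivity)
    have : 2 * q / (dl + dl) = q / dl := by field_simp; ring
    rw [this] at base
    refine Filter.Tendsto.congr' ?_ base
    filter_upwards [hφpos, hEpos, hN1pos] with μ h0 h1 h2
    have hs : Real.sqrt (Δf μ ^ 2 - 4 * Df μ) ^ 2 = Δf μ ^ 2 - 4 * Df μ := Real.sq_sqrt h1.le
    have hsum : 0 < Δf μ + Real.sqrt (Δf μ ^ 2 - 4 * Df μ) := by linarith
    rw [div_eq_div_iff (by rw [← add_div]; exact (div_pos hsum h0).ne') two_ne_zero]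
    field_simp
    nlinarith [hs, show Real.sqrt (Δf μ ^ 2 - Df μ * 4) ^ 2 = Δf μ ^ 2 - Df μ * 4 by rw [mul_comm (Df μ) 4]; exact hs]
  exact ⟨hN1d, hN2, hN1top, hN1pos⟩


lemma logb_sqrt' {x : ℝ} (hx : 0 < x) :
    Real.logb 2 (Real.sqrt x) = Real.logb 2 x / 2 := by
  rw [Real.logb, Real.logb, Real.log_sqrt hx.le]
  ring

lemma poly_coeffs {d1 d0 e1 e0 : ℝ}
    (hEq : (X : ℝ[X]) ^ 4 + C d1 * X ^ 2 + C d0 = X ^ 4 + C e1 * X ^ 2 + C e0) :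
    d1 = e1 ∧ d0 = e0 := by
  constructor
  · have := congrArg (fun P : ℝ[X] => P.coeff 2) hEq
    simpa [coeff_add, coeff_C_mul, coeff_X_pow, coeff_C] using this
  · have := congrArg (fun P : ℝ[X] => P.coeff 0) hEq
    simpa [coeff_add, coeff_C_mul, coeff_X_pow, coeff_C] using this

lemma QQ_alg (v w x y μ : ℝ) (hμ : 0 < μ) (hw : 0 < w) (hx : 0 < x) (hy : 0 < y) (hv : 0 < v) :
    v / μ * (x / μ) / (w * (y / μ ^ 2)) = v / w * (x / y) := by
  field_simp

end Helpers

set_option maxHeartbeats 2000000 in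
/-- Theorem 1 (DR): the finite-modulation key rate `I_AB(μ) − χ_AE(μ)` converges to
the closed form `R▶(g, ω, η, γ)` as `μ → ∞`. -/

theorem key_rate_limit_DR (g ω γ η : ℝ)
    (hg : 1 < g) (hω : 1 < ω) (hγ : 1 ≤ γ) (hη : η ∈ Set.Ioo (0 : ℝ) 1)
    (Δb Db : ℝ → ℝ)
    (hchar : ∀ μ : ℝ, 1 < μ →
      Matrix.charpoly (Omega2 * Mdr g ω γ η μ) =
        X ^ 4 + C (Δb μ) * X ^ 2 + C (Db μ)) :
    Filter.Tendsto
      (fun μ : ℝ =>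
        (1 / 2) * Real.logb 2
            ((η * μ + (1 - η) * γ) /
              ((η * μ + (1 - η) * γ) - g * η * (μ ^ 2 - 1) / (g * μ + (g - 1) * ω)))
          - ((h (nu1 g ω μ) + h (nu2 g ω μ))
              - (h (Real.sqrt ((Δb μ + Real.sqrt ((Δb μ) ^ 2 - 4 * Db μ)) / 2))
                + h (Real.sqrt ((Δb μ - Real.sqrt ((Δb μ) ^ 2 - 4 * Db μ)) / 2)))))
      Filter.atTop (nhds (Rdr g ω η γ)) := by
  
  obtain ⟨hη0, hη1⟩ := hη
  have hg0 : (0:ℝ) < g - 1 := by linarith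
  have hgpos : (0:ℝ) < g := by linarith
  have hγ0 : (0:ℝ) < γ := by linarith
  have hω0 : (0:ℝ) < ω := by linarith
  have h1η : (0:ℝ) < 1 - η := by linarith
  have hω2 : (0:ℝ) < ω ^ 2 - 1 := by nlinarith
  have hc2 : (0:ℝ) ≤ g * (ω ^ 2 - 1) := le_of_lt (mul_pos hgpos hω2)
  have hm1 : (0:ℝ) < g * η * ω := mul_pos (mul_pos hgpos hη0) hω0
  have hm2 : (0:ℝ) < (g - 1) * (1 - η) * γ := mul_pos (mul_pos hg0 h1η) hγ0
  have hm3 : (0:ℝ) < η * (g - 1) * ω := mul_pos (mul_pos hη0 hg0) hω0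
  have hm4 : (0:ℝ) < g * (1 - η) * γ := mul_pos (mul_pos hgpos h1η) hγ0
  have hm5 : (0:ℝ) < γ * (g - 1) * (1 - η) := mul_pos (mul_pos hγ0 hg0) h1η
  have hm6 : (0:ℝ) < γ * ω * (g - 1) * (1 - η) := mul_pos (mul_pos (mul_pos hγ0 hω0) hg0) h1η
  have hLpos : (0:ℝ) < ((g * η * ω + (g - 1) * (1 - η) * γ) / η) := div_pos (by nlinarith) hη0
  have hWpos : (0:ℝ) < ((η * (g - 1) * ω + g * (1 - η) * γ) / g) := div_pos (by nlinarith) hgpos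
  have hA1den : (0:ℝ) < (g - 1) * (g * γ * (1 - η) + η * ω * (g - 1)) :=
    mul_pos hg0 (by nlinarith)
  have hA1pos : (0:ℝ) < (g * (g * η * ω + γ * (g - 1) * (1 - η)) / ((g - 1) * (g * γ * (1 - η) + η * ω * (g - 1)))) := div_pos (mul_pos hgpos (by nlinarith)) hA1den
  have hA2den : (0:ℝ) < g * η * ω + γ * (g - 1) * (1 - η) := by nlinarith
  have hA2one : (1:ℝ) < (ω * (g * η + γ * ω * (g - 1) * (1 - η)) / (g * η * ω + γ * (g - 1) * (1 - η))) := by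
    rw [lt_div_iff₀ hA2den]
    nlinarith [mul_pos hm5 hω2]
  have hsqA2 : (1:ℝ) < Real.sqrt (ω * (g * η + γ * ω * (g - 1) * (1 - η)) / (g * η * ω + γ * (g - 1) * (1 - η))) := by
    apply Real.lt_sqrt_of_sq_lt
    rw [one_pow]
    exact hA2one
  -- p(μ) limit
  have hp : Tendsto (fun μ : ℝ => (((g - 1) * μ + g * ω) - (η * μ + (1 - η) * γ)⁻¹ * ((g - 1) * η * (μ ^ 2 - 1)))) atTop (nhds ((g * η * ω + (g - 1) * (1 - η) * γ) / η)) := by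
    have base := ratlim (g * η * ω + (g - 1) * (1 - η) * γ) (g * ω * (1 - η) * γ + (g - 1) * η)
      η ((1 - η) * γ) hη0
    refine Filter.Tendsto.congr' ?_ base
    filter_upwards [eventually_gt_atTop 0] with μ hμ
    have hva : (0:ℝ) < (η * μ + (1 - η) * γ) := by positivity
    field_simp
    ring
  -- a(μ)/μ limit
  have ha : Tendsto (fun μ : ℝ => ((g - 1) * μ + g * ω) / μ) atTop (nhds (g - 1)) := by
    have base := ratlim (g - 1) (g * ω) 1 0 one_pos
    rw [div_one] at base
    exact base.congr fun μ => by rw [one_mul, add_zero]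
  -- DeltaC/μ limit
  have hDCd : Tendsto (fun μ : ℝ => ((((g - 1) * μ + g * ω) - (η * μ + (1 - η) * γ)⁻¹ * ((g - 1) * η * (μ ^ 2 - 1))) * ((g - 1) * μ + g * ω) + ω ^ 2 - 2 * (g * (ω ^ 2 - 1))) / μ) atTop (nhds (((g * η * ω + (g - 1) * (1 - η) * γ) / η) * (g - 1))) := by
    have base : Tendsto (fun μ : ℝ => (((g - 1) * μ + g * ω) - (η * μ + (1 - η) * γ)⁻¹ * ((g - 1) * η * (μ ^ 2 - 1))) * (((g - 1) * μ + g * ω) / μ) + (ω ^ 2 - 2 * (g * (ω ^ 2 - 1))) * μ⁻¹) atTop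
        (nhds (((g * η * ω + (g - 1) * (1 - η) * γ) / η) * (g - 1) + (ω ^ 2 - 2 * (g * (ω ^ 2 - 1))) * 0)) :=
      (hp.mul ha).add (tendsto_inv_atTop_zero.const_mul _)
    rw [mul_zero, add_zero] at base
    refine Filter.Tendsto.congr' ?_ base
    filter_upwards [eventually_gt_atTop 0] with μ hμ
    field_simp
    ring
  -- DC/μ limit
  have hDDd : Tendsto (fun μ : ℝ => (((((g - 1) * μ + g * ω) - (η * μ + (1 - η) * γ)⁻¹ * ((g - 1) * η * (μ ^ 2 - 1))) * ω - (g * (ω ^ 2 - 1))) * (((g - 1) * μ + g * ω) * ω - (g * (ω ^ 2 - 1)))) / μ) atTop (nhds ((((g * η * ω + (g - 1) * (1 - η) * γ) / η) * ω - (g * (ω ^ 2 - 1))) * ((g - 1) * ω))) := by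
    have haux : Tendsto (fun μ : ℝ => (((g - 1) * μ + g * ω) * ω - (g * (ω ^ 2 - 1))) / μ) atTop (nhds ((g - 1) * ω)) := by
      have base := ratlim ((g - 1) * ω) (g * ω * ω - (g * (ω ^ 2 - 1))) 1 0 one_pos
      rw [show (g - 1) * ω / 1 = (g - 1) * ω by ring] at base
      refine base.congr fun μ => ?_
      ring_nf
    have base := ((hp.mul_const ω).sub_const (g * (ω ^ 2 - 1))).mul haux
    refine base.congr fun μ => ?_
    rw [mul_div_assoc]
  have hcond := sympl_limits (by positivity : (0:ℝ) < (((g * η * ω + (g - 1) * (1 - η) * γ) / η) * (g - 1))) tendsto_id hDCd hDDd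
  obtain ⟨hN1bd, hN2b, hN1btop', hN1bpos'⟩ := hcond
  -- unconditional
  have hDelta2 : Tendsto (fun μ : ℝ => Delta g ω μ / μ ^ 2) atTop (nhds ((g - 1) ^ 2)) := by
    have hinv2 : Tendsto (fun μ : ℝ => (μ ^ 2)⁻¹) atTop (nhds 0) :=
      tendsto_inv_atTop_zero.comp (tendsto_pow_atTop two_ne_zero)
    have base : Tendsto (fun μ : ℝ => (((g - 1) * μ + g * ω) / μ) ^ 2 + (ω ^ 2 - 2 * (g * (ω ^ 2 - 1))) * (μ ^ 2)⁻¹) atTop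
        (nhds ((g - 1) ^ 2 + (ω ^ 2 - 2 * (g * (ω ^ 2 - 1))) * 0)) := (ha.pow 2).add (hinv2.const_mul _)
    rw [mul_zero, add_zero] at base
    refine Filter.Tendsto.congr' ?_ base
    filter_upwards [eventually_gt_atTop 0] with μ hμ
    rw [Delta]
    field_simp
    ring
  have hD2 : Tendsto (fun μ : ℝ => Dprod g ω μ / μ ^ 2) atTop (nhds (((g - 1) * ω) ^ 2)) := by
    have haux : Tendsto (fun μ : ℝ => (((g - 1) * μ + g * ω) * ω - (g * (ω ^ 2 - 1))) / μ) atTop (nhds ((g - 1) * ω)) := by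
      have base := ratlim ((g - 1) * ω) (g * ω * ω - (g * (ω ^ 2 - 1))) 1 0 one_pos
      rw [show (g - 1) * ω / 1 = (g - 1) * ω by ring] at base
      refine base.congr fun μ => ?_
      ring_nf
    have := haux.pow 2
    refine this.congr fun μ => ?_
    rw [Dprod, div_pow]
  have huncond := sympl_limits (by positivity : (0:ℝ) < (g - 1) ^ 2)
    (tendsto_pow_atTop two_ne_zero) hDelta2 hD2
  obtain ⟨hN1d, hN2, hN1top', hN1pos'⟩ := huncond
  have hN2' : Tendsto (fun μ : ℝ => ((Delta g ω μ - Real.sqrt (Delta g ω μ ^ 2 - 4 * Dprod g ω μ)) / 2)) atTop (nhds (ω ^ 2)) := by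
    have : ((g - 1) * ω) ^ 2 / (g - 1) ^ 2 = ω ^ 2 := by
      field_simp
    rwa [this] at hN2
  have hN2b' : Tendsto (fun μ : ℝ => ((((((g - 1) * μ + g * ω) - (η * μ + (1 - η) * γ)⁻¹ * ((g - 1) * η * (μ ^ 2 - 1))) * ((g - 1) * μ + g * ω) + ω ^ 2 - 2 * (g * (ω ^ 2 - 1))) - Real.sqrt (((((g - 1) * μ + g * ω) - (η * μ + (1 - η) * γ)⁻¹ * ((g - 1) * η * (μ ^ 2 - 1))) * ((g - 1) * μ + g * ω) + ω ^ 2 - 2 * (g * (ω ^ 2 - 1))) ^ 2 - 4 * (((((g - 1) * μ + g * ω) - (η * μ + (1 - η) * γ)⁻¹ * ((g - 1) * η * (μ ^ 2 - 1))) * ω - (g * (ω ^ 2 - 1))) * (((g - 1) * μ + g * ω) * ω - (g * (ω ^ 2 - 1)))))) / 2)) atTop (nhds (ω * (g * η + γ * ω * (g - 1) * (1 - η)) / (g * η * ω + γ * (g - 1) * (1 - η)))) := by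
    have : ((((g * η * ω + (g - 1) * (1 - η) * γ) / η) * ω - (g * (ω ^ 2 - 1))) * ((g - 1) * ω)) / (((g * η * ω + (g - 1) * (1 - η) * γ) / η) * (g - 1)) = (ω * (g * η + γ * ω * (g - 1) * (1 - η)) / (g * η * ω + γ * (g - 1) * (1 - η))) := by
      field_simp
      ring
    rwa [this] at hN2b
  -- V_A - t limit
  have hVAt : Tendsto (fun μ : ℝ => ((η * μ + (1 - η) * γ) - (g * η * (μ ^ 2 - 1) / (g * μ + (g - 1) * ω)))) atTop (nhds ((η * (g - 1) * ω + g * (1 - η) * γ) / g)) := by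
    have base := ratlim (η * (g - 1) * ω + g * (1 - η) * γ) ((1 - η) * γ * (g - 1) * ω + g * η)
      g ((g - 1) * ω) (by linarith : (0:ℝ) < g)
    refine Filter.Tendsto.congr' ?_ base
    filter_upwards [eventually_gt_atTop 0] with μ hμ
    have hden : (0:ℝ) < g * μ + (g - 1) * ω := by positivity
    field_simp
    ring
  have hva : Tendsto (fun μ : ℝ => (η * μ + (1 - η) * γ) / μ) atTop (nhds η) := by
    have base := ratlim η ((1 - η) * γ) 1 0 one_pos
    rw [div_one] at base
    exact base.congr fun μ => by rw [one_mul, add_zero]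
  -- atTop facts
  have hN1btop : Tendsto (fun μ : ℝ => Real.sqrt ((((((g - 1) * μ + g * ω) - (η * μ + (1 - η) * γ)⁻¹ * ((g - 1) * η * (μ ^ 2 - 1))) * ((g - 1) * μ + g * ω) + ω ^ 2 - 2 * (g * (ω ^ 2 - 1))) + Real.sqrt (((((g - 1) * μ + g * ω) - (η * μ + (1 - η) * γ)⁻¹ * ((g - 1) * η * (μ ^ 2 - 1))) * ((g - 1) * μ + g * ω) + ω ^ 2 - 2 * (g * (ω ^ 2 - 1))) ^ 2 - 4 * (((((g - 1) * μ + g * ω) - (η * μ + (1 - η) * γ)⁻¹ * ((g - 1) * η * (μ ^ 2 - 1))) * ω - (g * (ω ^ 2 - 1))) * (((g - 1) * μ + g * ω) * ω - (g * (ω ^ 2 - 1)))))) / 2)) atTop atTop :=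
    sqrt_tendsto_atTop.comp hN1btop'
  have hN1top : Tendsto (fun μ : ℝ => Real.sqrt ((Delta g ω μ + Real.sqrt (Delta g ω μ ^ 2 - 4 * Dprod g ω μ)) / 2)) atTop atTop :=
    sqrt_tendsto_atTop.comp hN1top'
  -- QQ limit
  have hQQ : Tendsto (fun μ : ℝ => ((η * μ + (1 - η) * γ) / ((η * μ + (1 - η) * γ) - (g * η * (μ ^ 2 - 1) / (g * μ + (g - 1) * ω)))) * (((((((g - 1) * μ + g * ω) - (η * μ + (1 - η) * γ)⁻¹ * ((g - 1) * η * (μ ^ 2 - 1))) * ((g - 1) * μ + g * ω) + ω ^ 2 - 2 * (g * (ω ^ 2 - 1))) + Real.sqrt (((((g - 1) * μ + g * ω) - (η * μ + (1 - η) * γ)⁻¹ * ((g - 1) * η * (μ ^ 2 - 1))) * ((g - 1) * μ + g * ω) + ω ^ 2 - 2 * (g * (ω ^ 2 - 1))) ^ 2 - 4 * (((((g - 1) * μ + g * ω) - (η * μ + (1 - η) * γ)⁻¹ * ((g - 1) * η * (μ ^ 2 - 1))) * ω - (g * (ω ^ 2 - 1))) * (((g - 1) * μ + g * ω) * ω -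 (g * (ω ^ 2 - 1)))))) / 2) / ((Delta g ω μ + Real.sqrt (Delta g ω μ ^ 2 - 4 * Dprod g ω μ)) / 2))) atTop (nhds (g * (g * η * ω + γ * (g - 1) * (1 - η)) / ((g - 1) * (g * γ * (1 - η) + η * ω * (g - 1))))) := by
    have hne : ((η * (g - 1) * ω + g * (1 - η) * γ) / g) * (g - 1) ^ 2 ≠ 0 := by positivity
    have base := (hva.mul hN1bd).div (hVAt.mul hN1d) hne
    have hval : η * (((g * η * ω + (g - 1) * (1 - η) * γ) / η) * (g - 1)) / (((η * (g - 1) * ω + g * (1 - η) * γ) / g) * (g - 1) ^ 2) = (g * (g * η * ω + γ * (g - 1) * (1 - η)) / ((g - 1) * (g * γ * (1 - η) + η * ω * (g - 1)))) := by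
      field_simp
      ring
    rw [hval] at base
    refine Filter.Tendsto.congr' ?_ base
    filter_upwards [eventually_gt_atTop 0, hVAt.eventually_const_lt hWpos,
      hN1pos', hN1bpos'] with μ hμ hvat hn1 hn1b
    have hva0 : (0:ℝ) < (η * μ + (1 - η) * γ) := by positivity
    exact QQ_alg _ _ _ _ _ hμ hvat hn1b hn1 hva0
  have hlog1 : Tendsto (fun μ : ℝ => (1 / 2) * Real.logb 2 (((η * μ + (1 - η) * γ) / ((η * μ + (1 - η) * γ) - (g * η * (μ ^ 2 - 1) / (g * μ + (g - 1) * ω)))) * (((((((g - 1) * μ + g * ω) - (η * μ + (1 - η) * γ)⁻¹ * ((g - 1) * η * (μ ^ 2 - 1))) * ((g - 1) * μ + g * ω) + ω ^ 2 - 2 * (g * (ω ^ 2 - 1))) + Real.sqrt (((((g - 1) * μ + g * ω) - (η * μ + (1 - η) * γ)⁻¹ * ((g - 1) * η * (μ ^ 2 - 1))) * ((g - 1) * μ + g * ω) + ω ^ 2 - 2 * (g * (ω ^ 2 - 1))) ^ 2 - 4 * (((((g - 1) * μ + g * ω) - (η * μ + (1 - η) * γ)⁻¹ * ((g - 1) *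 η * (μ ^ 2 - 1))) * ω - (g * (ω ^ 2 - 1))) * (((g - 1) * μ + g * ω) * ω - (g * (ω ^ 2 - 1)))))) / 2) / ((Delta g ω μ + Real.sqrt (Delta g ω μ ^ 2 - 4 * Dprod g ω μ)) / 2))))
      atTop (nhds ((1 / 2) * Real.logb 2 (g * (g * η * ω + γ * (g - 1) * (1 - η)) / ((g - 1) * (g * γ * (1 - η) + η * ω * (g - 1)))))) :=
    ((Real.continuousAt_logb hA1pos.ne').tendsto.comp hQQ).const_mul _
  obtain ⟨c, hc⟩ := h_sub_logb
  have hcomp_b1 : Tendsto (fun μ : ℝ => h (Real.sqrt ((((((g - 1) * μ + g * ω) - (η * μ + (1 - η) * γ)⁻¹ * ((g - 1) * η * (μ ^ 2 - 1))) * ((g - 1) * μ + g * ω) + ω ^ 2 - 2 * (g * (ω ^ 2 - 1))) + Real.sqrt (((((g - 1) * μ + g * ω) - (η * μ + (1 - η) * γ)⁻¹ * ((g - 1) * η * (μ ^ 2 - 1))) * ((g - 1) * μ + g * ω) + ω ^ 2 - 2 * (g * (ω ^ 2 - 1))) ^ 2 - 4 * (((((g - 1) * μ + g * ω) - (η * μ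 + (1 - η) * γ)⁻¹ * ((g - 1) * η * (μ ^ 2 - 1))) * ω - (g * (ω ^ 2 - 1))) * (((g - 1) * μ + g * ω) * ω - (g * (ω ^ 2 - 1)))))) / 2)) - Real.logb 2 (Real.sqrt ((((((g - 1) * μ + g * ω) - (η * μ + (1 - η) * γ)⁻¹ * ((g - 1) * η * (μ ^ 2 - 1))) * ((g - 1) * μ + g * ω) + ω ^ 2 - 2 * (g * (ω ^ 2 - 1))) + Real.sqrt (((((g - 1) * μ + g * ω) - (η * μ + (1 - η) * γ)⁻¹ * ((g - 1) * η * (μ ^ 2 - 1))) * ((g - 1) * μ + g * ω) + ω ^ 2 - 2 * (g * (ω ^ 2 - 1))) ^ 2 - 4 * (((((g - 1) * μ + g * ω) - (η * μ + (1 - η) * γ)⁻¹ * ((g - 1) * η * (μ ^ 2 - 1))) * ω - (g * (ω ^ 2 - 1))) * (((g - 1) * μ + g * ω) * ω - (g * (ω ^ 2 - 1)))))) / 2)))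
      atTop (nhds c) := hc.comp hN1btop
  have hcomp_nu1 : Tendsto (fun μ : ℝ => h (Real.sqrt ((Delta g ω μ + Real.sqrt (Delta g ω μ ^ 2 - 4 * Dprod g ω μ)) / 2)) - Real.logb 2 (Real.sqrt ((Delta g ω μ + Real.sqrt (Delta g ω μ ^ 2 - 4 * Dprod g ω μ)) / 2)))
      atTop (nhds c) := hc.comp hN1top
  have hhb2 : Tendsto (fun μ : ℝ => h (Real.sqrt ((((((g - 1) * μ + g * ω) - (η * μ + (1 - η) * γ)⁻¹ * ((g - 1) * η * (μ ^ 2 - 1))) * ((g - 1) * μ + g * ω) + ω ^ 2 - 2 * (g * (ω ^ 2 - 1))) - Real.sqrt (((((g - 1) * μ + g * ω) - (η * μ + (1 - η) * γ)⁻¹ * ((g - 1) * η * (μ ^ 2 - 1))) * ((g - 1) * μ + g * ω) + ω ^ 2 - 2 * (g * (ω ^ 2 - 1))) ^ 2 - 4 * (((((g - 1) * μ + g * ω) - (η * μ + (1 - η) * γ)⁻¹ * ((g - 1) * η * (μ ^ 2 - 1))) * ω - (g * (ω ^ 2 - 1))) * (((g - 1) * μ + g * ω) * ω - (g * (ω ^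 2 - 1)))))) / 2))) atTop (nhds (h (Real.sqrt (ω * (g * η + γ * ω * (g - 1) * (1 - η)) / (g * η * ω + γ * (g - 1) * (1 - η)))))) :=
    (h_continuousAt hsqA2).tendsto.comp ((Real.continuous_sqrt.tendsto _).comp hN2b')
  have hhnu2 : Tendsto (fun μ : ℝ => h (Real.sqrt ((Delta g ω μ - Real.sqrt (Delta g ω μ ^ 2 - 4 * Dprod g ω μ)) / 2))) atTop (nhds (h ω)) := by
    have hsq : Tendsto (fun μ : ℝ => Real.sqrt ((Delta g ω μ - Real.sqrt (Delta g ω μ ^ 2 - 4 * Dprod g ω μ)) / 2)) atTop (nhds ω) := by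
      have := (Real.continuous_sqrt.tendsto _).comp hN2'
      rwa [Real.sqrt_sq hω0.le] at this
    exact (h_continuousAt hω).tendsto.comp hsq
  have T := (((hlog1.add hcomp_b1).sub hcomp_nu1).add hhb2).sub hhnu2
  have hval : (1 / 2) * Real.logb 2 (g * (g * η * ω + γ * (g - 1) * (1 - η)) / ((g - 1) * (g * γ * (1 - η) + η * ω * (g - 1)))) + c - c + h (Real.sqrt (ω * (g * η + γ * ω * (g - 1) * (1 - η)) / (g * η * ω + γ * (g - 1) * (1 - η)))) - h ω = Rdr g ω η γ := by
    rw [Rdr]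
    ring
  rw [hval] at T
  refine Filter.Tendsto.congr' ?_ T
  have hbd : ∀ᶠ μ : ℝ in atTop, Δb μ = ((((g - 1) * μ + g * ω) - (η * μ + (1 - η) * γ)⁻¹ * ((g - 1) * η * (μ ^ 2 - 1))) * ((g - 1) * μ + g * ω) + ω ^ 2 - 2 * (g * (ω ^ 2 - 1))) ∧ Db μ = (((((g - 1) * μ + g * ω) - (η * μ + (1 - η) * γ)⁻¹ * ((g - 1) * η * (μ ^ 2 - 1))) * ω - (g * (ω ^ 2 - 1))) * (((g - 1) * μ + g * ω) * ω - (g * (ω ^ 2 - 1)))) := by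
    filter_upwards [eventually_gt_atTop 1] with μ hμ
    have hk : (0:ℝ) ≤ (g - 1) * η * (μ ^ 2 - 1) :=
      le_of_lt (mul_pos (mul_pos hg0 hη0) (by nlinarith))
    have hchar' := hchar μ hμ
    rw [charpoly_Mdr g ω γ η μ hk hc2] at hchar'
    obtain ⟨h1, h2⟩ := poly_coeffs hchar'
    exact ⟨h1.symm, h2.symm⟩
  filter_upwards [eventually_gt_atTop 1, hVAt.eventually_const_lt hWpos,
    hN1pos', hN1bpos', hbd] with μ hμ hvat hn1 hn1b hbd'
  obtain ⟨hΔe, hDe⟩ := hbd'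
  have hva0 : (0:ℝ) < (η * μ + (1 - η) * γ) := by positivity
  have e2 : Real.logb 2 (Real.sqrt ((Delta g ω μ + Real.sqrt (Delta g ω μ ^ 2 - 4 * Dprod g ω μ)) / 2)) = Real.logb 2 ((Delta g ω μ + Real.sqrt (Delta g ω μ ^ 2 - 4 * Dprod g ω μ)) / 2) / 2 := logb_sqrt' hn1
  have e3 : Real.logb 2 (Real.sqrt ((((((g - 1) * μ + g * ω) - (η * μ + (1 - η) * γ)⁻¹ * ((g - 1) * η * (μ ^ 2 - 1))) * ((g - 1) * μ + g * ω) + ω ^ 2 - 2 * (g * (ω ^ 2 - 1))) + Real.sqrt (((((g - 1) * μ + g * ω) - (η * μ + (1 - η) * γ)⁻¹ * ((g - 1) * η * (μ ^ 2 - 1))) * ((g - 1) * μ + g * ω) + ω ^ 2 - 2 * (g * (ω ^ 2 - 1))) ^ 2 - 4 * (((((g - 1) * μ + g * ω) - (η * μ + (1 - η) * γ)⁻¹ * ((g - 1) * η * (μ ^ 2 - 1))) * ω - (g * (ω ^ 2 - 1))) * (((g - 1) * μ + g * ω) * ω - (g * (ω ^ 2 - 1)))))) / 2)) = Real.logb 2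 ((((((g - 1) * μ + g * ω) - (η * μ + (1 - η) * γ)⁻¹ * ((g - 1) * η * (μ ^ 2 - 1))) * ((g - 1) * μ + g * ω) + ω ^ 2 - 2 * (g * (ω ^ 2 - 1))) + Real.sqrt (((((g - 1) * μ + g * ω) - (η * μ + (1 - η) * γ)⁻¹ * ((g - 1) * η * (μ ^ 2 - 1))) * ((g - 1) * μ + g * ω) + ω ^ 2 - 2 * (g * (ω ^ 2 - 1))) ^ 2 - 4 * (((((g - 1) * μ + g * ω) - (η * μ + (1 - η) * γ)⁻¹ * ((g - 1) * η * (μ ^ 2 - 1))) * ω - (g * (ω ^ 2 - 1))) * (((g - 1) * μ + g * ω) * ω - (g * (ω ^ 2 - 1)))))) / 2) / 2 := logb_sqrt' hn1b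
  have eQQ : Real.logb 2 (((η * μ + (1 - η) * γ) / ((η * μ + (1 - η) * γ) - (g * η * (μ ^ 2 - 1) / (g * μ + (g - 1) * ω)))) * (((((((g - 1) * μ + g * ω) - (η * μ + (1 - η) * γ)⁻¹ * ((g - 1) * η * (μ ^ 2 - 1))) * ((g - 1) * μ + g * ω) + ω ^ 2 - 2 * (g * (ω ^ 2 - 1))) + Real.sqrt (((((g - 1) * μ + g * ω) - (η * μ + (1 - η) * γ)⁻¹ * ((g - 1) * η * (μ ^ 2 - 1))) * ((g - 1) * μ + g * ω) + ω ^ 2 - 2 * (g * (ω ^ 2 - 1))) ^ 2 - 4 * (((((g - 1) * μ + g * ω) - (η * μ + (1 - η) * γ)⁻¹ * ((g - 1) * η * (μ ^ 2 - 1))) * ω - (g * (ω ^ 2 - 1))) * (((g - 1) * μ + g * ω) * ω - (g * (ω ^ 2 - 1)))))) / 2) / ((Delta g ω μ + Real.sqrt (Delta g ω μ ^ 2 - 4 * Dprod g ω μ)) / 2))) =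
      Real.logb 2 ((η * μ + (1 - η) * γ) / ((η * μ + (1 - η) * γ) - (g * η * (μ ^ 2 - 1) / (g * μ + (g - 1) * ω)))) + (Real.logb 2 ((((((g - 1) * μ + g * ω) - (η * μ + (1 - η) * γ)⁻¹ * ((g - 1) * η * (μ ^ 2 - 1))) * ((g - 1) * μ + g * ω) + ω ^ 2 - 2 * (g * (ω ^ 2 - 1))) + Real.sqrt (((((g - 1) * μ + g * ω) - (η * μ + (1 - η) * γ)⁻¹ * ((g - 1) * η * (μ ^ 2 - 1))) * ((g - 1) * μ + g * ω) + ω ^ 2 - 2 * (g * (ω ^ 2 - 1))) ^ 2 - 4 * (((((g - 1) * μ + g * ω) - (η * μ + (1 - η) * γ)⁻¹ * ((g - 1) * η * (μ ^ 2 - 1))) * ω - (g * (ω ^ 2 - 1))) * (((g - 1) * μ + g * ω) * ω - (g * (ω ^ 2 - 1)))))) / 2) - Real.logb 2 ((Delta g ω μ + Real.sqrt (Delta g ω μ ^ 2 - 4 * Dprod g ω μ)) / 2)) := by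
    rw [Real.logb_mul (by positivity) (by positivity), Real.logb_div hn1b.ne' hn1.ne']
  simp only [nu1, nu2]
  rw [hΔe, hDe, e2, e3, eQQ]
  ring
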